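/- For integers N > k⁴ ≥ 1, there exists a k-fold Sidon set A ⊆ {1, …, N} with |A| ≥ c · k^{-4/3} · N^{1/3}, for some absolute positive constant c. -/

import Mathlib

def IsTrivialSol (u x : Fin 4 → ℤ) : Prop :=
  ∀ i, ∑ j ∈ Finset.univ.filter (fun j => x j = x i), u j = 0

def IsKFoldSidon (k : ℤ) (A : Set ℤ) : Prop :=
  ∀ u x : Fin 4 → ℤ, (∀ i, |u i| ≤ k) → (∑ i, u i) = 0 →
    (∀ i, x i ∈ A) → (∑ i, u i * x i) = 0 → IsTrivialSol u x

open Finset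

/-- The set of "blocked" values that could create a nontrivial solution with `A`. -/
noncomputable def blockedOf (k : ℤ) (A : Finset ℤ) : Finset ℤ :=
  ((Fintype.piFinset fun _ : Fin 4 => Finset.Icc (-k) k) ×ˢ
      ((univ : Finset (Fin 4)) ×ˢ ((univ : Finset (Fin 3 → Bool)) ×ˢ
        (Fintype.piFinset fun _ : Fin 3 => A)))).image
    fun p =>
      (-∑ t ∈ univ.filter (fun t => ¬ p.2.2.1 t),
          p.1 (p.2.1.succAbove t) * p.2.2.2 t) /
        (p.1 p.2.1 + ∑ t ∈ univ.filter (fun t => p.2.2.1 t), p.1 (p.2.1.succAbove t))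

lemma blockedOf_card (k : ℤ) (hk : 0 ≤ k) (A : Finset ℤ) :
    (blockedOf k A).card ≤ 32 * (2 * k.toNat + 1) ^ 4 * A.card ^ 3 := by
  refine le_trans (Finset.card_image_le) ?_
  rw [Finset.card_product, Finset.card_product, Finset.card_product,
    Fintype.card_piFinset, Fintype.card_piFinset]
  simp only [Int.card_Icc, Finset.card_univ, Fintype.card_fin, Fintype.card_pi,
    Fintype.card_bool, Finset.prod_const, Finset.card_univ]
  have h1 : (k + 1 - -k).toNat = 2 * k.toNat + 1 := by omega
  rw [h1]
  ring_nf
  omega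

lemma extend_sidon {k : ℤ} {A : Finset ℤ} (hA : IsKFoldSidon k ↑A)
    {y : ℤ} (hyA : y ∉ A) (hyB : y ∉ blockedOf k A) :
    IsKFoldSidon k ↑(insert y A : Finset ℤ) := by
  intro u x hu hsum hx hxs
  by_cases hall : ∀ i, x i ∈ (A : Set ℤ)
  · exact hA u x hu hsum hall hxs
  push_neg at hall
  have hmem : ∀ i, x i = y ∨ x i ∈ A := by
    intro i
    have := hx i
    simpa using this
  obtain ⟨j0, hj0⟩ := hall
  have hj0y : x j0 = y := (hmem j0).resolve_right hj0
  by_cases hally : ∀ i, x i = y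
  · intro i
    have h : univ.filter (fun j => x j = x i) = univ := by
      ext j; simp [hally j, hally i]
    rw [h]; exact hsum
  push_neg at hally
  obtain ⟨i0, hi0⟩ := hally
  have hi0A : x i0 ∈ A := (hmem i0).resolve_left hi0
  set v : ℤ := ∑ i ∈ univ.filter (fun i => x i = y), u i with hv
  -- the sum over the y-slots times y
  have hsplit : v * y + ∑ i ∈ univ.filter (fun i => ¬ x i = y), u i * x i = 0 := by
    rw [← hxs, ← Finset.sum_filter_add_sum_filter_not univ (fun i => x i = y) (fun i => u i * x i)]
    congr 1
    rw [hv, Finset.sum_mul]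
    apply Finset.sum_congr rfl
    intro i hi
    simp only [Finset.mem_filter] at hi
    rw [hi.2]
  by_cases hv0 : v = 0
  · -- reduce to a solution inside A
    set u' : Fin 4 → ℤ := fun i => if x i = y then 0 else u i with hu'
    set x' : Fin 4 → ℤ := fun i => if x i = y then x i0 else x i with hx'
    have hk0 : (0 : ℤ) ≤ k := le_trans (abs_nonneg _) (hu 0)
    have htriv : IsTrivialSol u' x' := by
      apply hA
      · intro i
        rw [hu']
        dsimp only
        split
        · simpa using hk0
        · exact hu i
      · have : ∑ i, u' i = ∑ i ∈ univ.filter (fun i => ¬ x i = y), u i := by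
          rw [Finset.sum_filter]
          apply Finset.sum_congr rfl
          intro i _
          rw [hu']
          dsimp only
          by_cases h : x i = y <;> simp [h]
        rw [this]
        have := Finset.sum_filter_add_sum_filter_not univ (fun i => x i = y) u
        rw [← hv] at this
        omega
      · intro i
        rw [hx']
        dsimp only
        split
        · exact hi0A
        · exact (hmem i).resolve_left (by assumption)
      · have : ∑ i, u' i * x' i = ∑ i ∈ univ.filter (fun i => ¬ x i = y), u i * x i := by
          rw [Finset.sum_filter]
          apply Finset.sum_congr rfl
          intro i _
          rw [hu', hx']
          dsimp only
          by_cases h : x i = y <;> simp [h]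
        rw [this]
        rw [hv0] at hsplit
        simpa using hsplit
    -- transfer triviality
    intro i
    by_cases hiy : x i = y
    · have h : univ.filter (fun j => x j = x i) = univ.filter (fun j => x j = y) := by
        ext j; simp [hiy]
      rw [h, ← hv, hv0]
    · have := htriv i
      have hxi' : x' i = x i := by rw [hx']; simp [hiy]
      calc ∑ j ∈ univ.filter (fun j => x j = x i), u j
          = ∑ j ∈ univ.filter (fun j => x' j = x' i), u' j := by
            rw [Finset.sum_filter, Finset.sum_filter]
            apply Finset.sum_congr rfl
            intro j _
            by_cases hjy : x j = y
            · have : u' j = 0 := by rw [hu']; simp [hjy]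
              simp [hjy, this, Ne.symm hiy]
            · have h1 : x' j = x j := by rw [hx']; simp [hjy]
              have h2 : u' j = u j := by rw [hu']; simp [hjy]
              rw [h1, h2, hxi']
        _ = 0 := this
  · -- y is blocked: contradiction
    exfalso
    apply hyB
    rw [blockedOf, Finset.mem_image]
    refine ⟨⟨u, j0, (fun t => decide (x (j0.succAbove t) = y)),
      fun t => if x (j0.succAbove t) = y then x i0 else x (j0.succAbove t)⟩, ?_, ?_⟩
    · rw [Finset.mem_product]
      constructor
      · rw [Fintype.mem_piFinset]
        intro i
        rw [Finset.mem_Icc]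
        have := hu i
        rw [abs_le] at this
        exact this
      rw [Finset.mem_product]
      refine ⟨Finset.mem_univ _, ?_⟩
      rw [Finset.mem_product]
      refine ⟨Finset.mem_univ _, ?_⟩
      rw [Fintype.mem_piFinset]
      intro t
      dsimp only
      split
      · exact hi0A
      · exact (hmem _).resolve_left (by assumption)
    · dsimp only
      have hvp : u j0 + ∑ t ∈ univ.filter (fun t => decide (x (j0.succAbove t) = y) = true),
          u (j0.succAbove t) = v := by
        rw [hv]
        rw [Finset.sum_filter, Finset.sum_filter]
        rw [Fin.sum_univ_succAbove (fun i => if x i = y then u i else 0) j0]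
        simp only [hj0y, if_pos rfl]
        congr 1
        apply Finset.sum_congr rfl
        intro t _
        by_cases h : x (j0.succAbove t) = y <;> simp [h]
      have hSp : (-∑ t ∈ univ.filter (fun t => ¬ decide (x (j0.succAbove t) = y) = true),
          u (j0.succAbove t) * (if x (j0.succAbove t) = y then x i0 else x (j0.succAbove t)))
          = v * y := by
        have h2 : ∑ i ∈ univ.filter (fun i => ¬ x i = y), u i * x i
            = ∑ t ∈ univ.filter (fun t => ¬ decide (x (j0.succAbove t) = y) = true),
              u (j0.succAbove t) * (if x (j0.succAbove t) = y then x i0 else x (j0.succAbove t)) := by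
          rw [Finset.sum_filter, Finset.sum_filter]
          rw [Fin.sum_univ_succAbove (fun i => if ¬ x i = y then u i * x i else 0) j0]
          simp only [hj0y, not_true, if_false, zero_add, decide_eq_true_eq]
          apply Finset.sum_congr rfl
          intro t _
          by_cases h : x (j0.succAbove t) = y <;> simp [h]
        rw [← h2]
        omega
      rw [hvp, hSp, Int.mul_ediv_cancel_left y hv0]

/-- Greedy construction step by step. -/
lemma good_sidon {k : ℤ} (hk : 1 ≤ k) (N : ℕ) :
    ∀ m : ℕ, m + 32 * (2 * k.toNat + 1) ^ 4 * m ^ 3 ≤ N →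
    ∃ A : Finset ℤ, ↑A ⊆ Set.Icc (1 : ℤ) (N : ℤ) ∧ IsKFoldSidon k ↑A ∧ A.card = m := by
  intro m
  induction m with
  | zero =>
    intro _
    refine ⟨∅, by simp, ?_, by simp⟩
    intro u x hu hsum hx hxs
    exact absurd (hx 0) (by simp)
  | succ m ih =>
    intro hle
    have hm : m + 32 * (2 * k.toNat + 1) ^ 4 * m ^ 3 ≤ N := by
      have h1 : m ^ 3 ≤ (m + 1) ^ 3 := Nat.pow_le_pow_left (Nat.le_succ m) 3
      have h2 : 32 * (2 * k.toNat + 1) ^ 4 * m ^ 3 ≤ 32 * (2 * k.toNat + 1) ^ 4 * (m + 1) ^ 3 :=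
        Nat.mul_le_mul_left _ h1
      omega
    obtain ⟨A, hAsub, hAsid, hAcard⟩ := ih hm
    have hk0 : (0 : ℤ) ≤ k := by omega
    have hcard : (A ∪ blockedOf k A).card < (Finset.Icc (1 : ℤ) (N : ℤ)).card := by
      have hb := blockedOf_card k hk0 A
      have h1 : (A ∪ blockedOf k A).card ≤ A.card + (blockedOf k A).card :=
        Finset.card_union_le _ _
      have h3 : (Finset.Icc (1 : ℤ) (N : ℤ)).card = N := by
        rw [Int.card_Icc]; omega
      rw [h3, hAcard] at *
      have hC : 0 < 32 * (2 * k.toNat + 1) ^ 4 := by positivity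
      have h4 : m ^ 3 < (m + 1) ^ 3 := by nlinarith
      have h5 : 32 * (2 * k.toNat + 1) ^ 4 * m ^ 3 < 32 * (2 * k.toNat + 1) ^ 4 * (m + 1) ^ 3 :=
        Nat.mul_lt_mul_of_le_of_lt (le_refl _) h4 hC
      omega
    obtain ⟨y, hyIcc, hyn⟩ : ∃ y ∈ Finset.Icc (1 : ℤ) (N : ℤ), y ∉ A ∪ blockedOf k A := by
      by_contra h
      push_neg at h
      exact absurd (Finset.card_le_card h) (not_le.mpr hcard)
    rw [Finset.mem_union, not_or] at hyn
    refine ⟨insert y A, ?_, extend_sidon hAsid hyn.1 hyn.2, ?_⟩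
    · intro z hz
      simp only [Finset.coe_insert, Set.mem_insert_iff] at hz
      rcases hz with rfl | hz
      · simpa using hyIcc
      · exact hAsub hz
    · rw [Finset.card_insert_of_notMem hyn.1, hAcard]

lemma singleton_sidon (k : ℤ) : IsKFoldSidon k (↑({1} : Finset ℤ)) := by
  intro u x hu hsum hx hxs
  have h1 : ∀ i, x i = 1 := by intro i; simpa using hx i
  intro i
  have h : univ.filter (fun j => x j = x i) = univ := by
    ext j; simp [h1 j, h1 i]
  rw [h]; exact hsum

theorem stmt5 :
    ∃ c : ℝ, 0 < c ∧ ∀ k N : ℕ, 1 ≤ k ^ 4 → k ^ 4 < N →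
      ∃ A : Finset ℤ, ↑A ⊆ Set.Icc (1 : ℤ) (N : ℤ) ∧ IsKFoldSidon (k : ℤ) ↑A ∧
        c * (k : ℝ) ^ (-(4 : ℝ) / 3) * (N : ℝ) ^ ((1 : ℝ) / 3) ≤ (A.card : ℝ) := by
  refine ⟨(2593 : ℝ) ^ (-(1 : ℝ)/3) / 2, by positivity, ?_⟩
  intro k N hk1 hkN
  have hk : 1 ≤ k := Nat.one_le_iff_ne_zero.mpr (by rintro rfl; simp at hk1)
  have hN : 1 ≤ N := by omega
  have hk0 : (0 : ℝ) < (k : ℝ) := by positivity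
  have hN0 : (0 : ℝ) < (N : ℝ) := by exact_mod_cast Nat.pos_of_ne_zero (by omega)
  set r : ℝ := ((N : ℝ) / (2593 * (k : ℝ) ^ 4)) ^ ((1 : ℝ)/3) with hr
  have hr0 : 0 ≤ r := Real.rpow_nonneg (by positivity) _
  have key : (2593 : ℝ) ^ (-(1 : ℝ)/3) / 2 * (k : ℝ) ^ (-(4 : ℝ) / 3) * (N : ℝ) ^ ((1 : ℝ) / 3)
      = r / 2 := by
    rw [hr, Real.div_rpow (by positivity) (by positivity),
      Real.mul_rpow (by norm_num) (by positivity),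
      ← Real.rpow_natCast (k : ℝ) 4, ← Real.rpow_mul hk0.le,
      show ((4 : ℕ) : ℝ) * ((1:ℝ)/3) = (4 : ℝ)/3 by norm_num,
      show (-(4 : ℝ)/3) = -((4 : ℝ)/3) by ring, Real.rpow_neg hk0.le,
      show (-(1 : ℝ)/3) = -((1 : ℝ)/3) by ring,
      Real.rpow_neg (by norm_num : (0:ℝ) ≤ 2593)]
    have h1 : (0:ℝ) < (2593:ℝ) ^ ((1:ℝ)/3) := by positivity
    have h2 : (0:ℝ) < (k:ℝ) ^ ((4:ℝ)/3) := by positivity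
    field_simp
  have hr3 : r ^ (3 : ℕ) = (N : ℝ) / (2593 * (k : ℝ) ^ 4) := by
    rw [hr, ← Real.rpow_natCast (((N : ℝ) / (2593 * (k : ℝ) ^ 4)) ^ ((1 : ℝ)/3)) 3,
      ← Real.rpow_mul (by positivity)]
    norm_num
  by_cases hr1 : r < 1
  · -- use {1}
    refine ⟨{1}, ?_, by simpa using singleton_sidon (k : ℤ), ?_⟩
    · intro z hz
      simp only [Finset.coe_singleton, Set.mem_singleton_iff] at hz
      subst hz
      constructor <;> [norm_num; exact_mod_cast hN]
    · rw [key]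
      simp only [Finset.card_singleton, Nat.cast_one]
      linarith
  · push_neg at hr1
    set m : ℕ := ⌊r⌋₊ with hm
    have hm1 : 1 ≤ m := Nat.le_floor (by exact_mod_cast hr1)
    have hmr : (m : ℝ) ≤ r := Nat.floor_le hr0
    -- the greedy condition
    have hcond : m + 32 * (2 * ((k : ℤ)).toNat + 1) ^ 4 * m ^ 3 ≤ N := by
      have htk : ((k : ℤ)).toNat = k := Int.toNat_natCast k
      rw [htk]
      have h1 : 32 * (2 * k + 1) ^ 4 ≤ 2592 * k ^ 4 := by
        have : 2 * k + 1 ≤ 3 * k := by omega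
        nlinarith [Nat.pow_le_pow_left this 4]
      have h2 : m ≤ k ^ 4 * m ^ 3 := by
        calc m ≤ m ^ 3 := Nat.le_self_pow (by norm_num) m
        _ ≤ k ^ 4 * m ^ 3 := Nat.le_mul_of_pos_left _ (by positivity)
      have h3 : 2593 * k ^ 4 * m ^ 3 ≤ N := by
        have hreal : (2593 : ℝ) * (k : ℝ) ^ 4 * (m : ℝ) ^ 3 ≤ (N : ℝ) := by
          have hm3 : (m : ℝ) ^ 3 ≤ r ^ 3 := by
            apply pow_le_pow_left₀ (by positivity) hmr
          rw [hr3] at hm3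
          have hpos : (0 : ℝ) < 2593 * (k : ℝ) ^ 4 := by positivity
          rw [le_div_iff₀ hpos] at hm3
          nlinarith
        exact_mod_cast hreal
      nlinarith
    obtain ⟨A, hsub, hsid, hcard⟩ := good_sidon (by exact_mod_cast hk) N m hcond
    refine ⟨A, hsub, hsid, ?_⟩
    rw [key, hcard]
    have : r < m + 1 := Nat.lt_floor_add_one r
    have : (1 : ℝ) ≤ m := by exact_mod_cast hm1
    linarith
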